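/- A finite set HC of propositional Horn clauses has the termination property if and only if HC is recursion-free. -/

import Mathlib

/-- A propositional literal over variables `V`: either a positive or a negative literal. -/
inductive Lit (V : Type) where
  | pos : V → Lit V
  | neg : V → Lit V
deriving DecidableEq

/-- A propositional clause: a finite multiset of literals. -/
abbrev Clause (V : Type) := Multiset (Lit V)

/-- Whether a literal is positive. -/
def Lit.isPos {V : Type} : Lit V → Bool
  | .pos _ => true
  | .neg _ => false

/-- A Horn clause contains at most one positive literal. -/
def IsHorn {V : Type} (c : Clause V) : Prop :=
  c.countP (fun l => l.isPos = true) ≤ 1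

/-- `Resolvent c₁ c₂ r`: `r` is obtained by binary resolution from `c₁` (containing a
positive literal `p`) and `c₂` (containing the negative literal `¬p`). -/
def Resolvent {V : Type} [DecidableEq V] (c₁ c₂ r : Clause V) : Prop :=
  ∃ p : V, Lit.pos p ∈ c₁ ∧ Lit.neg p ∈ c₂ ∧
    r = c₁.erase (Lit.pos p) + c₂.erase (Lit.neg p)

/-- A set of clauses has the termination property if there is no infinite sequence
`c₀, c₁, c₂, …` of clauses such that `c₀ ∈ 𝒞` and each `cᵢ` (for `i ≥ 1`) is derived by
binary resolution from `c_{i-1}` and a clause of `𝒞`. -/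
def TerminationProperty {V : Type} [DecidableEq V] (𝒞 : Set (Clause V)) : Prop :=
  ¬ ∃ f : ℕ → Clause V, f 0 ∈ 𝒞 ∧
      ∀ i : ℕ, ∃ d ∈ 𝒞, Resolvent (f i) d (f (i + 1)) ∨ Resolvent d (f i) (f (i + 1))

/-- The dependence relation of a set of Horn clauses: `p →_HC q` iff some clause contains
the positive literal `p` and the negative literal `¬q`. -/
def Dep {V : Type} (HC : Set (Clause V)) (p q : V) : Prop :=
  ∃ c ∈ HC, Lit.pos p ∈ c ∧ Lit.neg q ∈ c

/-- A set of Horn clauses is recursion-free if its dependence relation is acyclic,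
i.e., the transitive closure of the dependence relation is irreflexive. -/
def RecursionFree {V : Type} (HC : Set (Clause V)) : Prop :=
  Irreflexive (Relation.TransGen (Dep HC))

lemma notRF_notTerm {V : Type} [DecidableEq V] (HC : Set (Clause V))
    (h : ¬ RecursionFree HC) : ¬ TerminationProperty HC := by
  simp only [RecursionFree, Irreflexive, not_forall] at h
  obtain ⟨p, hp⟩ := h
  rw [not_not] at hp
  have step : ∀ q : V, Relation.TransGen (Dep HC) q q →
      ∃ s, ∃ c ∈ HC, Lit.pos q ∈ c ∧ Lit.neg s ∈ c ∧ Relation.TransGen (Dep HC) s s := by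
    intro q hq
    obtain ⟨s, hqs, hsq⟩ := Relation.TransGen.head'_iff.mp hq
    obtain ⟨c, hc, hpos, hneg⟩ := hqs
    exact ⟨s, c, hc, hpos, hneg, Relation.TransGen.tail' hsq ⟨c, hc, hpos, hneg⟩⟩
  have stepC : ∀ c : Clause V, (∃ q, Lit.neg q ∈ c ∧ Relation.TransGen (Dep HC) q q) →
      ∃ c', (∃ q, Lit.neg q ∈ c' ∧ Relation.TransGen (Dep HC) q q) ∧
        ∃ d ∈ HC, Resolvent d c c' := by
    rintro c ⟨q, hqc, hq⟩
    obtain ⟨s, d, hd, hpos, hneg, hs⟩ := step q hq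
    refine ⟨d.erase (Lit.pos q) + c.erase (Lit.neg q), ⟨s, ?_, hs⟩, d, hd, q, hpos, hqc, rfl⟩
    exact Multiset.mem_add.mpr (Or.inl ((Multiset.mem_erase_of_ne (fun h => by cases h)).mpr hneg))
  obtain ⟨s, c₀, hc₀, _, hneg₀, hs₀⟩ := step p hp
  choose next hnext using stepC
  intro hterm
  refine hterm ⟨fun n => (Nat.rec (motive := fun _ => {c : Clause V // ∃ q, Lit.neg q ∈ c ∧ Relation.TransGen (Dep HC) q q})
      ⟨c₀, s, hneg₀, hs₀⟩ (fun _ ih => ⟨next ih.1 ih.2, (hnext ih.1 ih.2).1⟩) n : {c : Clause V // _}).1,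
    hc₀, fun i => ?_⟩
  obtain ⟨d, hd, hres⟩ := (hnext _ _).2
  exact ⟨d, hd, Or.inr hres⟩

lemma rf_term {V : Type} [DecidableEq V] (HC : Set (Clause V)) (hfin : HC.Finite)
    (hhorn : ∀ c ∈ HC, IsHorn c) (hrf : RecursionFree HC) : TerminationProperty HC := by
  classical
  rintro ⟨f, hf0, hstep⟩
  -- the finite set of variables occurring in HC
  set Vars : Set V := {x | ∃ c ∈ HC, Lit.pos x ∈ c ∨ Lit.neg x ∈ c} with hVarsDef
  have hVarsFin : Vars.Finite := by
    have hsub : Vars ⊆ ⋃ c ∈ HC, {x | Lit.pos x ∈ c ∨ Lit.neg x ∈ c} := by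
      rintro x ⟨c, hc, h⟩; exact Set.mem_biUnion hc h
    refine Set.Finite.subset (Set.Finite.biUnion hfin fun c _ => ?_) hsub
    have : {x | Lit.pos x ∈ c ∨ Lit.neg x ∈ c} ⊆
        (fun l : Lit V => match l with | .pos x => x | .neg x => x) '' {l | l ∈ c} := by
      rintro x (h | h)
      exacts [⟨Lit.pos x, h, rfl⟩, ⟨Lit.neg x, h, rfl⟩]
    exact ((Multiset.finite_toSet c).image _).subset this
  set N := Vars.ncard with hN
  set Reach : V → Set V := fun q => {x | Relation.TransGen (Dep HC) q x} with hReach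
  have hReachSub : ∀ q, Reach q ⊆ Vars := by
    intro q x hx
    induction hx with
    | single h => obtain ⟨c, hc, _, hneg⟩ := h; exact ⟨c, hc, Or.inr hneg⟩
    | tail _ h _ => obtain ⟨c, hc, _, hneg⟩ := h; exact ⟨c, hc, Or.inr hneg⟩
  have hReachFin : ∀ q, (Reach q).Finite := fun q => hVarsFin.subset (hReachSub q)
  set ρ : V → ℕ := fun q => (Reach q).ncard with hρ
  have hρle : ∀ q, ρ q ≤ N := fun q => Set.ncard_le_ncard (hReachSub q) hVarsFin
  have hdep : ∀ p q, Dep HC p q → ρ q < ρ p := by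
    intro p q h
    apply Set.ncard_lt_ncard _ (hReachFin p)
    have hsub : Reach q ⊆ Reach p := fun x hx => Relation.TransGen.head h hx
    refine (Set.ssubset_iff_of_subset hsub).mpr ⟨q, Relation.TransGen.single h, fun hc => ?_⟩
    exact hrf q hc
  obtain ⟨M, hM⟩ : ∃ M, ∀ c ∈ HC, Multiset.card c ≤ M := by
    obtain ⟨M, hM⟩ := (hfin.image Multiset.card).bddAbove
    exact ⟨M, fun c hc => hM ⟨c, hc, rfl⟩⟩
  set B := M + 1 with hB
  set w : Lit V → ℕ := fun l => match l with
    | .pos p => 2 * N + 1 - ρ p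
    | .neg p => ρ p
    with hw
  set μ : Clause V → ℕ := fun c => (c.map (fun l => B ^ w l)).sum with hμ
  -- key counting lemma
  have key : ∀ (c e : Clause V) (L : Lit V), L ∈ c → Multiset.card e ≤ M →
      (∀ l ∈ e, w l < w L) → μ (e + c.erase L) < μ c := by
    intro c e L hL hcard hlt
    have hc : μ c = B ^ w L + μ (c.erase L) := by
      conv_lhs => rw [← Multiset.cons_erase hL]
      simp [hμ]
    have hadd : μ (e + c.erase L) = μ e + μ (c.erase L) := by simp [hμ]
    have he : μ e < B ^ w L := by
      rcases Multiset.empty_or_exists_mem e with he0 | ⟨l0, hl0⟩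
      · subst he0
        simp only [hμ, Multiset.map_zero, Multiset.sum_zero]
        positivity
      · have hW : 1 ≤ w L := by have := hlt l0 hl0; omega
        have hbd : ∀ x ∈ e.map (fun l => B ^ w l), x ≤ B ^ (w L - 1) := by
          intro x hx
          obtain ⟨l, hl, rfl⟩ := Multiset.mem_map.mp hx
          exact Nat.pow_le_pow_right (by omega) (by have := hlt l hl; omega)
        have hpos : 0 < B ^ (w L - 1) := Nat.pow_pos (by omega)
        calc μ e ≤ Multiset.card (e.map (fun l => B ^ w l)) • B ^ (w L - 1) :=
              Multiset.sum_le_card_nsmul _ _ hbd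
          _ = Multiset.card e * B ^ (w L - 1) := by rw [Multiset.card_map, smul_eq_mul]
          _ ≤ M * B ^ (w L - 1) := Nat.mul_le_mul_right _ hcard
          _ < (M + 1) * B ^ (w L - 1) := by
              exact Nat.mul_lt_mul_of_lt_of_le (Nat.lt_succ_self M) le_rfl hpos
          _ = B ^ w L := by
              rw [← hB, ← pow_succ']
              congr 1
              omega
    omega
  -- strict decrease of the measure
  have decr : ∀ i, μ (f (i + 1)) < μ (f i) := by
    intro i
    obtain ⟨d, hd, hres | hres⟩ := hstep i
    · -- Resolvent (f i) d (f (i+1))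
      obtain ⟨p, hpf, hnd, heq⟩ := hres
      rw [heq, add_comm]
      refine key (f i) (d.erase (Lit.neg p)) (Lit.pos p) hpf ?_ ?_
      · rw [Multiset.card_erase_of_mem hnd]
        exact le_trans (Nat.pred_le _) (hM d hd)
      · intro l hl
        have hld : l ∈ d := Multiset.mem_of_mem_erase hl
        match l with
        | .pos q =>
          have hdep' : Dep HC q p := ⟨d, hd, hld, hnd⟩
          have h1 := hdep _ _ hdep'
          have h2 := hρle q
          show 2 * N + 1 - ρ q < 2 * N + 1 - ρ p
          omega
        | .neg r =>
          have h2 := hρle r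
          have h3 := hρle p
          show ρ r < 2 * N + 1 - ρ p
          omega
    · -- Resolvent d (f i) (f (i+1))
      obtain ⟨p, hpd, hnf, heq⟩ := hres
      rw [heq]
      refine key (f i) (d.erase (Lit.pos p)) (Lit.neg p) hnf ?_ ?_
      · rw [Multiset.card_erase_of_mem hpd]
        exact le_trans (Nat.pred_le _) (hM d hd)
      · intro l hl
        have hld : l ∈ d := Multiset.mem_of_mem_erase hl
        match l with
        | .pos q =>
          -- contradicts Horn
          exfalso
          have hhd := hhorn d hd
          have h1 : 0 < Multiset.countP (fun l : Lit V => l.isPos = true) (d.erase (Lit.pos p)) :=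
            Multiset.countP_pos.mpr ⟨Lit.pos q, hl, rfl⟩
          have h2 : Multiset.countP (fun l : Lit V => l.isPos = true) d
              = Multiset.countP (fun l : Lit V => l.isPos = true) (d.erase (Lit.pos p)) + 1 := by
            conv_lhs => rw [← Multiset.cons_erase hpd]
            rw [Multiset.countP_cons]
            simp [Lit.isPos]
          rw [IsHorn] at hhd
          omega
        | .neg r =>
          have hdep' : Dep HC p r := ⟨d, hd, hpd, hld⟩
          exact hdep _ _ hdep'
  have hmono : ∀ n, μ (f n) + n ≤ μ (f 0) := by
    intro n
    induction n with
    | zero => omega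
    | succ k ih => have := decr k; omega
  have := hmono (μ (f 0) + 1)
  omega

/-- A finite set of propositional Horn clauses has the termination property if and only
if it is recursion-free. -/
theorem terminationProperty_iff_recursionFree {V : Type} [DecidableEq V]
    (HC : Set (Clause V)) (hfin : HC.Finite) (hhorn : ∀ c ∈ HC, IsHorn c) :
    TerminationProperty HC ↔ RecursionFree HC := by
  constructor
  · intro ht
    by_contra h
    exact notRF_notTerm HC h ht
  · exact rf_term HC hfin hhorn
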